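/- arXiv:0805.4711 — 3 statements merged into one kernel-verified Lean document; each statement's English description precedes it below -/
import Mathlib

section
/- Let 0 < t < 2 and let 𝒫 = {P_1, …, P_N} be a finite collection of pairwise disjoint dyadic squares in the plane satisfying the t-Carleson packing condition with norm at most 1, i.e., for every dyadic square Q, Σ_{P ∈ 𝒫, P ⊆ Q} ℓ(P)^t ≤ ℓ(Q)^t. Define the weight w(x) = Σ_j ℓ(P_j)^{t−2} · χ_{P_j}(x). Then for every axis-parallel square Q (not necessarily dyadic), ∫_Q w dx ≤ 16 · ℓ(Q)^t. -/
open MeasureTheory Set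
open scoped Classical

/-- The closed dyadic square `[2^{-k}m₁, 2^{-k}(m₁+1)] × [2^{-k}m₂, 2^{-k}(m₂+1)]`. -/
def dyadicSquare (k : ℤ) (m : ℤ × ℤ) : Set (ℝ × ℝ) :=
  Icc ((2 : ℝ) ^ (-k) * m.1) ((2 : ℝ) ^ (-k) * (m.1 + 1)) ×ˢ
    Icc ((2 : ℝ) ^ (-k) * m.2) ((2 : ℝ) ^ (-k) * (m.2 + 1))

lemma dyadic_meas (k : ℤ) (m : ℤ × ℤ) : MeasurableSet (dyadicSquare k m) :=
  measurableSet_Icc.prod measurableSet_Icc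

lemma dyadic_vol (k : ℤ) (m : ℤ × ℤ) :
    volume (dyadicSquare k m) = ENNReal.ofReal ((2:ℝ)^(-k)) * ENNReal.ofReal ((2:ℝ)^(-k)) := by
  have h : ∀ c x : ℝ, c * (x + 1) - c * x = c := fun c x => by ring
  rw [dyadicSquare, Measure.volume_eq_prod, Measure.prod_prod, Real.volume_Icc,
    Real.volume_Icc, h, h]

/-- endpoint inequalities for the dyadic ancestor -/
lemma interval_sub (k' kj : ℤ) (h : k' ≤ kj) (m : ℤ) :
    (2:ℝ)^(-k') * (m / 2^(kj - k').toNat : ℤ) ≤ (2:ℝ)^(-kj) * m ∧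
    (2:ℝ)^(-kj) * (m+1) ≤ (2:ℝ)^(-k') * ((m / 2^(kj - k').toNat : ℤ) + 1) := by
  set D : ℤ := 2 ^ (kj - k').toNat with hD
  have hDpos : (0:ℤ) < D := pow_pos (by norm_num) _
  set q : ℤ := m / D with hq
  have h1 : D * q ≤ m := by
    have := Int.ediv_mul_le m (ne_of_gt hDpos)
    linarith [mul_comm q D]
  have h2 : m + 1 ≤ D * (q + 1) := by
    have := Int.lt_ediv_add_one_mul_self m hDpos
    linarith [mul_comm (q+1) D]
  have hcast : ((D:ℤ):ℝ) = (2:ℝ) ^ (kj - k') := by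
    rw [hD]
    push_cast
    rw [← zpow_natCast (2:ℝ), Int.toNat_of_nonneg (by omega)]
  have hkey : (2:ℝ)^(-kj) * (D:ℝ) = (2:ℝ)^(-k') := by
    rw [hcast, ← zpow_add₀ (two_ne_zero)]
    ring_nf
  have hp : (0:ℝ) < (2:ℝ)^(-kj) := zpow_pos (by norm_num) _
  have hc1 : ((D:ℝ) * (q:ℝ)) ≤ (m:ℝ) := by exact_mod_cast h1
  have hc2 : ((m:ℝ)+1) ≤ (D:ℝ)*((q:ℝ)+1) := by exact_mod_cast h2
  constructor
  · calc (2:ℝ)^(-k') * (q:ℝ) = (2:ℝ)^(-kj) * ((D:ℝ) * q) := by rw [← hkey]; ring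
    _ ≤ (2:ℝ)^(-kj) * (m:ℝ) := mul_le_mul_of_nonneg_left hc1 hp.le
  · calc (2:ℝ)^(-kj) * ((m:ℝ)+1) ≤ (2:ℝ)^(-kj) * ((D:ℝ)*((q:ℝ)+1)) :=
        mul_le_mul_of_nonneg_left hc2 hp.le
    _ = ((2:ℝ)^(-kj) * (D:ℝ)) * ((q:ℝ)+1) := by ring
    _ = (2:ℝ)^(-k') * ((q:ℝ)+1) := by rw [hkey]

lemma anc_range (L A s : ℝ) (hL : 0 < L) (hsL : s < 2*L) (m' : ℤ)
    (h1 : L * m' < A + s) (h2 : A < L * (m'+1)) :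
    m' ∈ Finset.Icc ⌊A / L⌋ (⌊A / L⌋ + 2) := by
  rw [Finset.mem_Icc]
  have hfl : (⌊A / L⌋ : ℝ) ≤ A / L := Int.floor_le _
  have hfl2 : A / L < ⌊A / L⌋ + 1 := Int.lt_floor_add_one _
  constructor
  · have h3 : (⌊A / L⌋ : ℝ) < m' + 1 := by
      have := (div_lt_iff₀ hL).2 (by linarith : A < (↑m' + 1) * L)
      linarith
    have : ⌊A / L⌋ < m' + 1 := by exact_mod_cast h3
    omega
  · have h4 : (m' : ℝ) < (⌊A / L⌋ : ℝ) + 3 := by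
      have hm : (m' : ℝ) < (A + s) / L := (lt_div_iff₀ hL).2 (by linarith)
      have : (A + s) / L < A / L + 2 := by
        rw [add_div]
        have : s / L < 2 := (div_lt_iff₀ hL).2 (by linarith)
        linarith
      linarith
    have : (m' : ℝ) < ((⌊A / L⌋ + 3 : ℤ) : ℝ) := by push_cast; linarith
    have : m' < ⌊A / L⌋ + 3 := by exact_mod_cast this
    omega

lemma pos_of_vol (A s x y : ℝ) (h : (volume (Icc A (A+s) ∩ Icc x y)).toReal ≠ 0) :
    x < A + s ∧ A < y := by
  rw [Icc_inter_Icc, Real.volume_Icc] at h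
  have h0 : ¬ ((A + s) ⊓ y - A ⊔ x ≤ 0) := by
    intro hle
    rw [ENNReal.ofReal_eq_zero.2 hle] at h
    simp at h
  push_neg at h0
  have hlt : A ⊔ x < (A + s) ⊓ y := by linarith
  constructor
  · calc x ≤ A ⊔ x := le_sup_right
    _ < (A + s) ⊓ y := hlt
    _ ≤ A + s := inf_le_left
  · calc A ≤ A ⊔ x := le_sup_left
    _ < (A + s) ⊓ y := hlt
    _ ≤ y := inf_le_right

/-- **The measure `w dx` is `t`-dimensional on all squares.**
If `𝒫 = {P_j}` are pairwise disjoint dyadic squares with `t`-Carleson packing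
norm at most `1`, and `w = Σ_j ℓ(P_j)^{t-2} χ_{P_j}`, then for every
axis-parallel square `Q` (of side `s`), `∫_Q w ≤ 16 s^t`. -/
theorem weight_t_dimensional (t : ℝ) (ht0 : 0 < t) (ht2 : t < 2)
    (N : ℕ) (k : Fin N → ℤ) (m : Fin N → ℤ × ℤ)
    (hdisj : ∀ i j, i ≠ j → Disjoint (dyadicSquare (k i) (m i)) (dyadicSquare (k j) (m j)))
    (hpack : ∀ (k' : ℤ) (m' : ℤ × ℤ),
      (∑ j, if dyadicSquare (k j) (m j) ⊆ dyadicSquare k' m'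
        then ((2 : ℝ) ^ (-(k j)) : ℝ) ^ t else 0) ≤ ((2 : ℝ) ^ (-k') : ℝ) ^ t)
    (a b s : ℝ) (hs : 0 < s) :
    ∫ x in (Icc a (a + s) ×ˢ Icc b (b + s)),
        (∑ j, Set.indicator (dyadicSquare (k j) (m j))
          (fun _ => ((2 : ℝ) ^ (-(k j)) : ℝ) ^ (t - 2)) x)
      ≤ 16 * s ^ t := by
  classical
  set Q : Set (ℝ × ℝ) := Icc a (a+s) ×ˢ Icc b (b+s) with hQdef
  have hQm : MeasurableSet Q := measurableSet_Icc.prod measurableSet_Icc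
  have hQvol : volume Q = ENNReal.ofReal s * ENNReal.ofReal s := by
    rw [hQdef, Measure.volume_eq_prod, Measure.prod_prod, Real.volume_Icc, Real.volume_Icc,
      show a + s - a = s by ring, show b + s - b = s by ring]
  set ℓ : Fin N → ℝ := fun j => (2:ℝ)^(-(k j)) with hℓdef
  have hℓeq : ∀ j, (2:ℝ)^(-(k j)) = ℓ j := fun _ => rfl
  simp only [hℓeq] at hpack ⊢
  have hℓpos : ∀ j, 0 < ℓ j := fun j => zpow_pos (by norm_num) _
  set v : Fin N → ℝ := fun j => (volume (Q ∩ dyadicSquare (k j) (m j))).toReal with hvdef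
  have hvnn : ∀ j, 0 ≤ v j := fun j => ENNReal.toReal_nonneg
  have hPvol : ∀ j, volume (dyadicSquare (k j) (m j)) ≠ ⊤ := by
    intro j
    rw [dyadic_vol]
    exact (ENNReal.mul_lt_top ENNReal.ofReal_lt_top ENNReal.ofReal_lt_top).ne
  -- Step 1: rewrite the integral as a sum
  have hint : ∀ j ∈ Finset.univ, Integrable
      (fun x => (dyadicSquare (k j) (m j)).indicator (fun _ => (ℓ j) ^ (t-2)) x)
      (volume.restrict Q) := by
    intro j _
    rw [integrable_indicator_iff (dyadic_meas _ _)]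
    refine integrableOn_const (ne_of_lt ?_)
    calc (volume.restrict Q) (dyadicSquare (k j) (m j))
        ≤ volume (dyadicSquare (k j) (m j)) := Measure.restrict_apply_le _ _
      _ < ⊤ := (hPvol j).lt_top
  rw [MeasureTheory.integral_finset_sum Finset.univ hint]
  have hterm : ∀ j, (∫ x in Q, (dyadicSquare (k j) (m j)).indicator
      (fun _ => ℓ j ^ (t-2)) x) = v j * ℓ j ^ (t-2) := by
    intro j
    rw [setIntegral_indicator (dyadic_meas _ _), setIntegral_const, smul_eq_mul]; rfl
  rw [Finset.sum_congr rfl (fun j _ => hterm j)]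
  -- scale
  set e : ℤ := Int.log 2 s with hedef
  set L : ℝ := (2:ℝ) ^ e with hLdef
  have hLpos : (0:ℝ) < L := zpow_pos (by norm_num) _
  have hLle : L ≤ s := by
    have h := Int.zpow_log_le_self (b := 2) one_lt_two hs
    rw [hLdef, hedef]; exact_mod_cast h
  have hsL : s < 2 * L := by
    have h := Int.lt_zpow_succ_log_self (b := 2) one_lt_two s
    have h' : s < (2:ℝ) ^ (e + 1) := by rw [hedef]; exact_mod_cast h
    rw [zpow_add_one₀ (two_ne_zero)] at h'
    rw [hLdef]; linarith
  have hst : (0:ℝ) < s ^ t := Real.rpow_pos_of_pos hs t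
  -- small squares have dyadic ancestors at scale e
  have hke : ∀ j, ℓ j < s → -e ≤ k j := by
    intro j hj
    have h1 : (2:ℝ)^(-(k j)) < (2:ℝ)^(e+1) := by
      rw [hℓeq j]
      calc ℓ j < s := hj
        _ < 2 * L := hsL
        _ = (2:ℝ)^(e+1) := by rw [hLdef, zpow_add_one₀ (two_ne_zero)]; ring
    have := (zpow_lt_zpow_iff_right₀ (by norm_num : (1:ℝ) < 2)).1 h1
    omega
  set anc : Fin N → ℤ × ℤ := fun j =>
    ((m j).1 / 2 ^ (k j - -e).toNat, (m j).2 / 2 ^ (k j - -e).toNat) with hancdef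
  have hsub : ∀ j, ℓ j < s → dyadicSquare (k j) (m j) ⊆ dyadicSquare (-e) (anc j) := by
    intro j hj
    have hk : -e ≤ k j := hke j hj
    have h1 := interval_sub (-e) (k j) hk (m j).1
    have h2 := interval_sub (-e) (k j) hk (m j).2
    exact Set.prod_mono (Icc_subset_Icc h1.1 h1.2) (Icc_subset_Icc h2.1 h2.2)
  have hancineq : ∀ j, ℓ j < s →
      (L * ((anc j).1 : ℝ) ≤ ℓ j * (m j).1 ∧ ℓ j * ((m j).1 + 1) ≤ L * (((anc j).1 : ℝ) + 1)) ∧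
      (L * ((anc j).2 : ℝ) ≤ ℓ j * (m j).2 ∧ ℓ j * ((m j).2 + 1) ≤ L * (((anc j).2 : ℝ) + 1)) := by
    intro j hj
    have hk : -e ≤ k j := hke j hj
    have h1 := interval_sub (-e) (k j) hk (m j).1
    have h2 := interval_sub (-e) (k j) hk (m j).2
    rw [neg_neg] at h1 h2
    exact ⟨⟨h1.1, h1.2⟩, ⟨h2.1, h2.2⟩⟩
  -- strict inequalities from positive volume
  have hstrict : ∀ j, v j ≠ 0 →
      (ℓ j * (m j).1 < a + s ∧ a < ℓ j * ((m j).1 + 1)) ∧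
      (ℓ j * (m j).2 < b + s ∧ b < ℓ j * ((m j).2 + 1)) := by
    intro j hj
    rw [hvdef] at hj
    simp only at hj
    have hQP : Q ∩ dyadicSquare (k j) (m j) =
        (Icc a (a+s) ∩ Icc (ℓ j * (m j).1) (ℓ j * ((m j).1 + 1))) ×ˢ
        (Icc b (b+s) ∩ Icc (ℓ j * (m j).2) (ℓ j * ((m j).2 + 1))) := by
      rw [hQdef, dyadicSquare, prod_inter_prod, hℓeq]
    rw [hQP, Measure.volume_eq_prod, Measure.prod_prod, ENNReal.toReal_mul] at hj
    obtain ⟨hx, hy⟩ := mul_ne_zero_iff.1 hj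
    exact ⟨pos_of_vol _ _ _ _ hx, pos_of_vol _ _ _ _ hy⟩
  -- split into small and big
  set S : Finset (Fin N) := Finset.univ.filter (fun j => ℓ j < s) with hSdef
  set B : Finset (Fin N) := Finset.univ.filter (fun j => ¬ ℓ j < s) with hBdef
  have hsplit : ∑ j, v j * ℓ j ^ (t-2) =
      (∑ j ∈ S, v j * ℓ j ^ (t-2)) + ∑ j ∈ B, v j * ℓ j ^ (t-2) :=
    (Finset.sum_filter_add_sum_filter_not _ _ _).symm
  -- big part
  have hBsum : ∑ j ∈ B, v j * ℓ j ^ (t-2) ≤ s ^ t := by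
    have hstep : ∑ j ∈ B, v j * ℓ j ^ (t-2) ≤ ∑ j ∈ B, v j * s ^ (t-2) := by
      apply Finset.sum_le_sum
      intro j hj
      have hjs : s ≤ ℓ j := not_lt.1 (Finset.mem_filter.1 hj).2
      exact mul_le_mul_of_nonneg_left
        (Real.rpow_le_rpow_of_nonpos hs hjs (by linarith)) (hvnn j)
    have hvsum : ∑ j ∈ B, v j ≤ s * s := by
      have h1 : ∑ j ∈ B, volume (Q ∩ dyadicSquare (k j) (m j)) =
          volume (⋃ j ∈ B, Q ∩ dyadicSquare (k j) (m j)) :=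
        (measure_biUnion_finset
          (fun i _ j _ hij => ((hdisj i j hij).mono inter_subset_right inter_subset_right))
          (fun j _ => hQm.inter (dyadic_meas _ _))).symm
      have h2 : volume (⋃ j ∈ B, Q ∩ dyadicSquare (k j) (m j)) ≤ volume Q :=
        measure_mono (iUnion₂_subset fun j _ => inter_subset_left)
      have h3 : (∑ j ∈ B, volume (Q ∩ dyadicSquare (k j) (m j))).toReal ≤ (volume Q).toReal := by
        apply ENNReal.toReal_mono
        · rw [hQvol]; exact (ENNReal.mul_lt_top ENNReal.ofReal_lt_top ENNReal.ofReal_lt_top).ne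
        · rw [h1]; exact h2
      rw [ENNReal.toReal_sum (fun j _ => ((measure_mono inter_subset_right).trans_lt
        (hPvol j).lt_top).ne)] at h3
      rw [hQvol, ENNReal.toReal_mul, ENNReal.toReal_ofReal hs.le] at h3
      exact h3
    have hrpownn : (0:ℝ) ≤ s ^ (t-2) := (Real.rpow_pos_of_pos hs _).le
    calc ∑ j ∈ B, v j * ℓ j ^ (t-2) ≤ ∑ j ∈ B, v j * s ^ (t-2) := hstep
      _ = (∑ j ∈ B, v j) * s ^ (t-2) := (Finset.sum_mul _ _ _).symm
      _ ≤ (s * s) * s ^ (t-2) := mul_le_mul_of_nonneg_right hvsum hrpownn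
      _ = s ^ t := by
          rw [show s * s = s ^ (2:ℝ) by rw [Real.rpow_two]; ring, ← Real.rpow_add hs]
          norm_num
  -- small part
  have hvle : ∀ j, v j ≤ ℓ j * ℓ j := by
    intro j
    have h1 : volume (Q ∩ dyadicSquare (k j) (m j)) ≤ volume (dyadicSquare (k j) (m j)) :=
      measure_mono inter_subset_right
    have h2 := ENNReal.toReal_mono (hPvol j) h1
    rw [dyadic_vol, ENNReal.toReal_mul, ENNReal.toReal_ofReal (hℓpos j).le] at h2
    exact h2
  set SP : Finset (Fin N) := S.filter (fun j => v j ≠ 0) with hSPdef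
  have hSsum : ∑ j ∈ S, v j * ℓ j ^ (t-2) ≤ ∑ j ∈ SP, ℓ j ^ t := by
    have hb : ∀ j ∈ S, v j * ℓ j ^ (t-2) ≤ if v j ≠ 0 then ℓ j ^ t else 0 := by
      intro j _
      by_cases h : v j = 0
      · simp [h]
      · rw [if_pos h]
        calc v j * ℓ j ^ (t-2) ≤ (ℓ j * ℓ j) * ℓ j ^ (t-2) :=
              mul_le_mul_of_nonneg_right (hvle j) (Real.rpow_pos_of_pos (hℓpos j) _).le
          _ = ℓ j ^ t := by
              rw [show ℓ j * ℓ j = ℓ j ^ (2:ℝ) by rw [Real.rpow_two]; ring,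
                ← Real.rpow_add (hℓpos j)]
              norm_num
    calc ∑ j ∈ S, v j * ℓ j ^ (t-2) ≤ ∑ j ∈ S, if v j ≠ 0 then ℓ j ^ t else 0 :=
          Finset.sum_le_sum hb
      _ = ∑ j ∈ SP, ℓ j ^ t := (Finset.sum_filter _ _).symm
  set C : Finset (ℤ × ℤ) := Finset.Icc ⌊a/L⌋ (⌊a/L⌋+2) ×ˢ Finset.Icc ⌊b/L⌋ (⌊b/L⌋+2) with hCdef
  have hmaps : ∀ j ∈ SP, anc j ∈ C := by
    intro j hj
    obtain ⟨hjS, hjv⟩ := Finset.mem_filter.1 hj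
    have hjsmall : ℓ j < s := (Finset.mem_filter.1 hjS).2
    obtain ⟨⟨ha1, ha2⟩, ⟨hb1, hb2⟩⟩ := hancineq j hjsmall
    obtain ⟨⟨hs1, hs2⟩, ⟨hs3, hs4⟩⟩ := hstrict j hjv
    rw [hCdef, Finset.mem_product]
    constructor
    · exact anc_range L a s hLpos hsL _ (lt_of_le_of_lt ha1 hs1) (lt_of_lt_of_le hs2 ha2)
    · exact anc_range L b s hLpos hsL _ (lt_of_le_of_lt hb1 hs3) (lt_of_lt_of_le hs4 hb2)
  have hfib := Finset.sum_fiberwise_of_maps_to hmaps (fun j => ℓ j ^ t)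
  have hfibbound : ∀ p ∈ C, ∑ j ∈ SP.filter (fun j => anc j = p), ℓ j ^ t ≤ s ^ t := by
    intro p _
    have h1 : ∑ j ∈ SP.filter (fun j => anc j = p), ℓ j ^ t =
        ∑ j ∈ SP.filter (fun j => anc j = p),
          (if dyadicSquare (k j) (m j) ⊆ dyadicSquare (-e) p then ℓ j ^ t else 0) := by
      apply Finset.sum_congr rfl
      intro j hj
      obtain ⟨hjSP, hjp⟩ := Finset.mem_filter.1 hj
      have hjsmall : ℓ j < s := (Finset.mem_filter.1 (Finset.mem_filter.1 hjSP).1).2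
      rw [if_pos (hjp ▸ hsub j hjsmall)]
    rw [h1]
    calc ∑ j ∈ SP.filter (fun j => anc j = p),
          (if dyadicSquare (k j) (m j) ⊆ dyadicSquare (-e) p then ℓ j ^ t else 0)
        ≤ ∑ j, (if dyadicSquare (k j) (m j) ⊆ dyadicSquare (-e) p then ℓ j ^ t else 0) := by
          apply Finset.sum_le_sum_of_subset_of_nonneg (Finset.subset_univ _)
          intro j _ _
          split
          · exact (Real.rpow_pos_of_pos (hℓpos j) _).le
          · exact le_refl 0
      _ ≤ ((2:ℝ) ^ (-(-e))) ^ t := hpack (-e) p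
      _ = L ^ t := by rw [neg_neg, hLdef]
      _ ≤ s ^ t := Real.rpow_le_rpow hLpos.le hLle ht0.le
  have hSP : ∑ j ∈ SP, ℓ j ^ t ≤ 9 * s ^ t := by
    rw [← hfib]
    calc ∑ p ∈ C, ∑ j ∈ SP.filter (fun j => anc j = p), ℓ j ^ t
        ≤ ∑ p ∈ C, s ^ t := Finset.sum_le_sum hfibbound
      _ = (C.card : ℝ) * s ^ t := by rw [Finset.sum_const, nsmul_eq_mul]
      _ = 9 * s ^ t := by
          have hc : C.card = 9 := by
            rw [hCdef, Finset.card_product, Int.card_Icc, Int.card_Icc]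
            have h3 : ∀ x : ℤ, (x + 2 + 1 - x).toNat = 3 := fun x => by omega
            rw [h3, h3]
          rw [hc]
          norm_num
  linarith [hSsum, hBsum, hsplit, hSP]
end

section
/- Let E ⊂ (0,1)² ⊂ ℝ² be compact, 0 < t < 2, and ε > 0. Then there exists a finite collection 𝒯 = {T_1, …, T_M} of closed dyadic squares with pairwise disjoint interiors, each intersecting E, such that: (i) E ⊆ ⋃_i T_i; (ii) for every dyadic square Q, Σ_{T_i ⊆ Q} ℓ(T_i)^t ≤ ℓ(Q)^t; (iii) Σ_i ℓ(T_i)^t ≤ 9·(ℋ^t_∞(E) + ε). -/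
open MeasureTheory Set ENNReal
open scoped Classical

/-- The `t`-dimensional Hausdorff content of `E ⊆ ℝ²`. -/
noncomputable def hausdorffContent (t : ℝ) (E : Set (ℝ × ℝ)) : ℝ≥0∞ :=
  ⨅ (B : ℕ → Set (ℝ × ℝ)) (_ : E ⊆ ⋃ i, B i), ∑' i, EMetric.diam (B i) ^ t

namespace PackAux

abbrev ι : Type := ℤ × ℤ × ℤ

noncomputable def sl (k : ℤ) : ℝ := (2 : ℝ) ^ (-k)

lemma sl_pos (k : ℤ) : 0 < sl k := zpow_pos (by norm_num) _

lemma sl_le_sl {k k' : ℤ} (h : k ≤ k') : sl k' ≤ sl k := by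
  unfold sl
  rw [zpow_le_zpow_iff_right₀ (by norm_num : (1:ℝ) < 2)]
  omega

lemma sl_le_sl_iff {k k' : ℤ} : sl k' ≤ sl k ↔ k ≤ k' := by
  unfold sl
  rw [zpow_le_zpow_iff_right₀ (by norm_num : (1:ℝ) < 2)]
  omega

lemma sl_mul {k k' : ℤ} (h : k ≤ k') : sl k = sl k' * ((2 ^ (k' - k).toNat : ℤ) : ℝ) := by
  unfold sl
  push_cast
  rw [← zpow_natCast (2:ℝ) (k'-k).toNat, ← zpow_add₀ (by norm_num : (2:ℝ) ≠ 0)]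
  congr 1
  omega

def J (k n : ℤ) : Set ℝ := Icc (sl k * n) (sl k * (n + 1))

lemma sq_eq (P : ι) : dyadicSquare P.1 P.2 = J P.1 P.2.1 ×ˢ J P.1 P.2.2 := rfl

noncomputable def sq (P : ι) : Set (ℝ × ℝ) := dyadicSquare P.1 P.2

lemma J_lt (k n : ℤ) : sl k * n < sl k * (n + 1) := by
  have := sl_pos k; nlinarith

/-- 1D dichotomy. -/
lemma dyadic1 {k k' : ℤ} (h : k ≤ k') (n n' : ℤ) :
    J k' n' ⊆ J k n ∨ sl k' * (n' + 1) ≤ sl k * n ∨ sl k * (n + 1) ≤ sl k' * n' := by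
  set N : ℤ := 2 ^ (k' - k).toNat with hN
  have hNmul : sl k = sl k' * (N : ℝ) := sl_mul h
  have hN1 : (1:ℤ) ≤ N := one_le_pow₀ (by norm_num)
  have hpos := sl_pos k'
  rcases le_or_gt (N * n) n' with h1 | h1
  · rcases le_or_gt (n' + 1) (N * n + N) with h2 | h2
    · left
      apply Icc_subset_Icc
      · rw [hNmul, mul_assoc]
        have : ((N * n : ℤ) : ℝ) ≤ (n' : ℝ) := by exact_mod_cast h1
        push_cast at this ⊢
        nlinarith
      · rw [hNmul, mul_assoc]
        have : ((n' + 1 : ℤ) : ℝ) ≤ ((N * n + N : ℤ) : ℝ) := by exact_mod_cast h2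
        push_cast at this ⊢
        nlinarith
    · right; right
      have h3 : N * (n + 1) ≤ n' := by nlinarith
      rw [hNmul, mul_assoc]
      have : ((N * (n+1) : ℤ) : ℝ) ≤ (n' : ℝ) := by exact_mod_cast h3
      push_cast at this ⊢
      nlinarith
  · right; left
    have h3 : n' + 1 ≤ N * n := by omega
    rw [hNmul, mul_assoc]
    have : ((n' + 1 : ℤ) : ℝ) ≤ ((N * n : ℤ) : ℝ) := by exact_mod_cast h3
    push_cast at this ⊢
    nlinarith

lemma interior_sq (P : ι) : interior (sq P) =
    Ioo (sl P.1 * P.2.1) (sl P.1 * (P.2.1 + 1)) ×ˢ Ioo (sl P.1 * P.2.2) (sl P.1 * (P.2.2 + 1)) := by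
  rw [sq, sq_eq, interior_prod_eq, J, J, interior_Icc, interior_Icc]

lemma interior_sq_nonempty (P : ι) : (interior (sq P)).Nonempty := by
  rw [interior_sq]
  exact (nonempty_Ioo.2 (J_lt _ _)).prod (nonempty_Ioo.2 (J_lt _ _))

lemma sq_nonempty (P : ι) : (sq P).Nonempty :=
  (interior_sq_nonempty P).mono interior_subset


lemma Ioo_disj {a b c d : ℝ} (h : b ≤ c) : Disjoint (Ioo a b) (Ioo c d) := by
  apply Set.disjoint_left.mpr
  rintro x ⟨_, h1⟩ ⟨h2, _⟩
  linarith

lemma disj_of_coord1 {P Q : ι}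
    (h : sl P.1 * (P.2.1 + 1) ≤ sl Q.1 * Q.2.1 ∨ sl Q.1 * (Q.2.1 + 1) ≤ sl P.1 * P.2.1) :
    Disjoint (interior (sq P)) (interior (sq Q)) := by
  rw [interior_sq, interior_sq]
  rcases h with h | h
  · exact Set.disjoint_left.mpr (by
      rintro ⟨x, y⟩ ⟨⟨_, h1⟩, _⟩ ⟨⟨h2, _⟩, _⟩; simp only at h1 h2; linarith)
  · exact Set.disjoint_left.mpr (by
      rintro ⟨x, y⟩ ⟨⟨h1, _⟩, _⟩ ⟨⟨_, h2⟩, _⟩; simp only at h1 h2; linarith)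

lemma disj_of_coord2 {P Q : ι}
    (h : sl P.1 * (P.2.2 + 1) ≤ sl Q.1 * Q.2.2 ∨ sl Q.1 * (Q.2.2 + 1) ≤ sl P.1 * P.2.2) :
    Disjoint (interior (sq P)) (interior (sq Q)) := by
  rw [interior_sq, interior_sq]
  rcases h with h | h
  · exact Set.disjoint_left.mpr (by
      rintro ⟨x, y⟩ ⟨_, ⟨_, h1⟩⟩ ⟨_, ⟨h2, _⟩⟩; simp only at h1 h2; linarith)
  · exact Set.disjoint_left.mpr (by
      rintro ⟨x, y⟩ ⟨_, ⟨h1, _⟩⟩ ⟨_, ⟨_, h2⟩⟩; simp only at h1 h2; linarith)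

/-- If the finer square is P (Q.1 ≤ P.1), either P ⊆ Q or interiors disjoint. -/
lemma sq_subset_or_disj {P Q : ι} (h : Q.1 ≤ P.1) :
    sq P ⊆ sq Q ∨ Disjoint (interior (sq P)) (interior (sq Q)) := by
  rcases dyadic1 h Q.2.1 P.2.1 with h1 | h1 | h1
  · rcases dyadic1 h Q.2.2 P.2.2 with h2 | h2 | h2
    · left
      rw [sq, sq, sq_eq, sq_eq]
      exact Set.prod_mono h1 h2
    · exact Or.inr (disj_of_coord2 (Or.inl h2))
    · exact Or.inr (disj_of_coord2 (Or.inr h2))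
  · exact Or.inr (disj_of_coord1 (Or.inl h1))
  · exact Or.inr (disj_of_coord1 (Or.inr h1))

lemma sq_dichotomy (P Q : ι) :
    sq P ⊆ sq Q ∨ sq Q ⊆ sq P ∨ Disjoint (interior (sq P)) (interior (sq Q)) := by
  rcases le_total Q.1 P.1 with h | h
  · rcases sq_subset_or_disj h with h' | h'
    · exact Or.inl h'
    · exact Or.inr (Or.inr h')
  · rcases sq_subset_or_disj h with h' | h'
    · exact Or.inr (Or.inl h')
    · exact Or.inr (Or.inr h'.symm)

lemma J_subset_J {P Q : ι} (h : sq P ⊆ sq Q) : J P.1 P.2.1 ⊆ J Q.1 Q.2.1 := by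
  intro u hu
  have hv : (sl P.1 * P.2.2) ∈ J P.1 P.2.2 := ⟨le_refl _, le_of_lt (J_lt _ _)⟩
  have : (u, sl P.1 * P.2.2) ∈ sq P := by rw [sq, sq_eq]; exact ⟨hu, hv⟩
  have := h this
  rw [sq, sq_eq] at this
  exact this.1

lemma J_subset_J' {P Q : ι} (h : sq P ⊆ sq Q) : J P.1 P.2.2 ⊆ J Q.1 Q.2.2 := by
  intro u hu
  have hv : (sl P.1 * P.2.1) ∈ J P.1 P.2.1 := ⟨le_refl _, le_of_lt (J_lt _ _)⟩
  have : (sl P.1 * P.2.1, u) ∈ sq P := by rw [sq, sq_eq]; exact ⟨hv, hu⟩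
  have := h this
  rw [sq, sq_eq] at this
  exact this.2

lemma endpoints_of_subset {P Q : ι} (h : sq P ⊆ sq Q) :
    (sl Q.1 * Q.2.1 ≤ sl P.1 * P.2.1 ∧ sl P.1 * (P.2.1 + 1) ≤ sl Q.1 * (Q.2.1 + 1)) ∧
    (sl Q.1 * Q.2.2 ≤ sl P.1 * P.2.2 ∧ sl P.1 * (P.2.2 + 1) ≤ sl Q.1 * (Q.2.2 + 1)) := by
  have h1 := J_subset_J h
  have h2 := J_subset_J' h
  rw [J, J] at h1 h2
  constructor
  · exact (Set.Icc_subset_Icc_iff (le_of_lt (J_lt _ _))).mp h1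
  · exact (Set.Icc_subset_Icc_iff (le_of_lt (J_lt _ _))).mp h2

lemma scale_le_of_subset {P Q : ι} (h : sq P ⊆ sq Q) : Q.1 ≤ P.1 := by
  obtain ⟨⟨h1, h2⟩, _⟩ := endpoints_of_subset h
  rw [← sl_le_sl_iff]
  have hp := sl_pos P.1
  have hq := sl_pos Q.1
  nlinarith [h1, h2]

lemma sq_eq_of_subset_scale {P Q : ι} (h : sq P ⊆ sq Q) (hs : P.1 = Q.1) : P = Q := by
  obtain ⟨⟨h1, h2⟩, ⟨h3, h4⟩⟩ := endpoints_of_subset h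
  rw [hs] at h1 h2 h3 h4
  have hq := sl_pos Q.1
  have e1 : (P.2.1 : ℝ) = Q.2.1 := by nlinarith
  have e2 : (P.2.2 : ℝ) = Q.2.2 := by nlinarith
  have e1' : P.2.1 = Q.2.1 := by exact_mod_cast e1
  have e2' : P.2.2 = Q.2.2 := by exact_mod_cast e2
  obtain ⟨a, b, c⟩ := P; obtain ⟨a', b', c'⟩ := Q
  simp_all

lemma sq_antisymm {P Q : ι} (h : sq P ⊆ sq Q) (h' : sq Q ⊆ sq P) : P = Q :=
  sq_eq_of_subset_scale h (le_antisymm (scale_le_of_subset h') (scale_le_of_subset h))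

/-- Ancestor of `P` at scale `j`. -/
noncomputable def anc (P : ι) (j : ℤ) : ι :=
  (j, P.2.1 / 2 ^ (P.1 - j).toNat, P.2.2 / 2 ^ (P.1 - j).toNat)

lemma anc_self (P : ι) : anc P P.1 = P := by
  obtain ⟨a, b, c⟩ := P
  simp [anc]

lemma J_subset_anc {k j n : ℤ} (h : j ≤ k) :
    J k n ⊆ J j (n / 2 ^ (k - j).toNat) := by
  have hNmul : sl j = sl k * ((2 ^ (k - j).toNat : ℤ) : ℝ) := sl_mul h
  have hNpos : (0:ℤ) < 2 ^ (k - j).toNat := by positivity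
  set N : ℤ := 2 ^ (k - j).toNat with hN
  have e := Int.mul_ediv_add_emod n N
  have r1 : 0 ≤ n % N := Int.emod_nonneg n (by omega)
  have r2 : n % N < N := Int.emod_lt_of_pos n hNpos
  have h1z : N * (n / N) ≤ n := by linarith
  have h2z : n + 1 ≤ N * (n / N + 1) := by nlinarith
  apply Icc_subset_Icc
  · rw [hNmul, mul_assoc]
    have c1 : (N:ℝ) * ((n / N : ℤ):ℝ) ≤ (n:ℝ) := by exact_mod_cast h1z
    nlinarith [sl_pos k]
  · rw [hNmul, mul_assoc]
    have c2 : (n:ℝ) + 1 ≤ (N:ℝ) * (((n / N : ℤ):ℝ) + 1) := by exact_mod_cast h2z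
    nlinarith [sl_pos k]

lemma anc_subset (P : ι) {j : ℤ} (h : j ≤ P.1) : sq P ⊆ sq (anc P j) := by
  rw [sq, sq, sq_eq, sq_eq]
  exact Set.prod_mono (J_subset_anc h) (J_subset_anc h)

lemma anc_fst (P : ι) (j : ℤ) : (anc P j).1 = j := rfl

/-- Any dyadic square containing `sq P` is the ancestor of `P` at its own scale. -/
lemma eq_anc_of_subset {P Q : ι} (h : sq P ⊆ sq Q) : Q = anc P Q.1 := by
  have hj : Q.1 ≤ P.1 := scale_le_of_subset h
  have h2 : sq P ⊆ sq (anc P Q.1) := anc_subset P hj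
  rcases sq_subset_or_disj (P := Q) (Q := anc P Q.1) (le_of_eq (anc_fst P Q.1)) with h3 | h3
  · exact sq_eq_of_subset_scale h3 (anc_fst P Q.1).symm
  · exfalso
    obtain ⟨x, hx⟩ := interior_sq_nonempty P
    exact Set.disjoint_left.mp h3 (interior_mono h hx) (interior_mono h2 hx)


section Stop

variable (w : ι → ℝ) (𝒮 : Finset ι) (N₀ : ℤ)

def heavy (Q : ι) : Prop := w Q ≤ ∑ S ∈ 𝒮.filter (fun S => sq S ⊆ sq Q), w S

noncomputable def cand (S : ι) : Finset ℤ :=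
  (Finset.Icc N₀ S.1).filter (fun j => heavy w 𝒮 (anc S j))

noncomputable def jmin (S : ι) : ℤ :=
  if h : (cand w 𝒮 N₀ S).Nonempty then (cand w 𝒮 N₀ S).min' h else S.1

noncomputable def Qmax (S : ι) : ι := anc S (jmin w 𝒮 N₀ S)

variable {w 𝒮 N₀}

lemma heavy_self (hpos : ∀ P, 0 < w P) {S : ι} (hS : S ∈ 𝒮) : heavy w 𝒮 S := by
  unfold heavy
  exact Finset.single_le_sum (f := w) (fun i _ => (hpos i).le)
    (Finset.mem_filter.mpr ⟨hS, subset_rfl⟩)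

lemma cand_nonempty (hpos : ∀ P, 0 < w P) (hsc : ∀ Q, heavy w 𝒮 Q → N₀ ≤ Q.1)
    {S : ι} (hS : S ∈ 𝒮) : (cand w 𝒮 N₀ S).Nonempty := by
  refine ⟨S.1, Finset.mem_filter.mpr ⟨Finset.mem_Icc.mpr ⟨hsc S (heavy_self hpos hS), le_refl _⟩, ?_⟩⟩
  rw [anc_self]
  exact heavy_self hpos hS

lemma Qmax_spec (hpos : ∀ P, 0 < w P) (hsc : ∀ Q, heavy w 𝒮 Q → N₀ ≤ Q.1)
    {S : ι} (hS : S ∈ 𝒮) :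
    heavy w 𝒮 (Qmax w 𝒮 N₀ S) ∧ sq S ⊆ sq (Qmax w 𝒮 N₀ S) ∧
      ∀ Q, heavy w 𝒮 Q → sq (Qmax w 𝒮 N₀ S) ⊆ sq Q → Q = Qmax w 𝒮 N₀ S := by
  have hne := cand_nonempty hpos hsc hS
  have hj : jmin w 𝒮 N₀ S ∈ cand w 𝒮 N₀ S := by
    rw [jmin, dif_pos hne]; exact Finset.min'_mem _ _
  obtain ⟨hj1, hj2⟩ := Finset.mem_filter.mp hj
  obtain ⟨hjN, hjS⟩ := Finset.mem_Icc.mp hj1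
  refine ⟨hj2, anc_subset S hjS, ?_⟩
  intro Q hQ hsub
  have hSQ : sq S ⊆ sq Q := (anc_subset S hjS).trans hsub
  have hQanc : Q = anc S Q.1 := eq_anc_of_subset hSQ
  have h1 : Q.1 ≤ jmin w 𝒮 N₀ S := by
    have := scale_le_of_subset hsub
    rwa [Qmax, anc_fst] at this
  have hmem : Q.1 ∈ cand w 𝒮 N₀ S := Finset.mem_filter.mpr
    ⟨Finset.mem_Icc.mpr ⟨hsc Q hQ, scale_le_of_subset hSQ⟩, by rw [← hQanc]; exact hQ⟩
  have h2 : jmin w 𝒮 N₀ S ≤ Q.1 := by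
    rw [jmin, dif_pos hne]; exact Finset.min'_le _ _ hmem
  rw [hQanc, le_antisymm h1 h2]
  rfl

theorem stopping (hpos : ∀ P, 0 < w P) (hsc : ∀ Q, heavy w 𝒮 Q → N₀ ≤ Q.1) :
    ∃ 𝒯 : Finset ι,
      (∀ T ∈ 𝒯, ∃ S ∈ 𝒮, sq S ⊆ sq T) ∧
      (∀ S ∈ 𝒮, ∃ T ∈ 𝒯, sq S ⊆ sq T) ∧
      (∀ T ∈ 𝒯, ∀ T' ∈ 𝒯, T ≠ T' → Disjoint (interior (sq T)) (interior (sq T'))) ∧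
      (∀ Q : ι, ∑ T ∈ 𝒯.filter (fun T => sq T ⊆ sq Q), w T ≤ w Q) ∧
      ∑ T ∈ 𝒯, w T ≤ ∑ S ∈ 𝒮, w S := by
  classical
  set 𝒯 := 𝒮.image (Qmax w 𝒮 N₀) with h𝒯
  have hmem : ∀ T ∈ 𝒯, heavy w 𝒮 T ∧ (∃ S ∈ 𝒮, sq S ⊆ sq T) ∧
      ∀ Q, heavy w 𝒮 Q → sq T ⊆ sq Q → Q = T := by
    intro T hT
    obtain ⟨S, hS, rfl⟩ := Finset.mem_image.mp hT
    obtain ⟨a, b, c⟩ := Qmax_spec hpos hsc hS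
    exact ⟨a, ⟨S, hS, b⟩, c⟩
  have hdisj : ∀ T ∈ 𝒯, ∀ T' ∈ 𝒯, T ≠ T' →
      Disjoint (interior (sq T)) (interior (sq T')) := by
    intro T hT T' hT' hne
    rcases sq_dichotomy T T' with h | h | h
    · exact absurd ((hmem T hT).2.2 T' (hmem T' hT').1 h) hne.symm
    · exact absurd ((hmem T' hT').2.2 T (hmem T hT).1 h) hne
    · exact h
  have hL : ∀ 𝒜 : Finset ι, 𝒜 ⊆ 𝒯 →
      ∑ T ∈ 𝒜, w T ≤ ∑ S ∈ 𝒮.filter (fun S => ∃ T ∈ 𝒜, sq S ⊆ sq T), w S := by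
    intro 𝒜 h𝒜
    have step1 : ∑ T ∈ 𝒜, w T ≤ ∑ T ∈ 𝒜, ∑ S ∈ 𝒮.filter (fun S => sq S ⊆ sq T), w S :=
      Finset.sum_le_sum (fun T hT => (hmem T (h𝒜 hT)).1)
    have hdisj' : (↑𝒜 : Set ι).PairwiseDisjoint
        (fun T => 𝒮.filter (fun S => sq S ⊆ sq T)) := by
      intro T hT T' hT' hne
      apply Finset.disjoint_left.mpr
      intro S hS hS'
      obtain ⟨_, c1⟩ := Finset.mem_filter.mp hS
      obtain ⟨_, c2⟩ := Finset.mem_filter.mp hS'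
      obtain ⟨x, hx⟩ := interior_sq_nonempty S
      exact Set.disjoint_left.mp (hdisj T (h𝒜 hT) T' (h𝒜 hT') hne)
        (interior_mono c1 hx) (interior_mono c2 hx)
    rw [← Finset.sum_biUnion hdisj'] at step1
    refine step1.trans (Finset.sum_le_sum_of_subset_of_nonneg ?_ (fun i _ _ => (hpos i).le))
    intro S hS
    obtain ⟨T, hT, hST⟩ := Finset.mem_biUnion.mp hS
    obtain ⟨hS𝒮, hc⟩ := Finset.mem_filter.mp hST
    exact Finset.mem_filter.mpr ⟨hS𝒮, T, hT, hc⟩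
  refine ⟨𝒯, fun T hT => (hmem T hT).2.1, ?_, hdisj, ?_, ?_⟩
  · intro S hS
    exact ⟨Qmax w 𝒮 N₀ S, Finset.mem_image_of_mem _ hS, (Qmax_spec hpos hsc hS).2.1⟩
  · intro Q
    by_cases hQ : heavy w 𝒮 Q
    · have hsub : 𝒯.filter (fun T => sq T ⊆ sq Q) ⊆ {Q} := by
        intro T hT
        obtain ⟨hT𝒯, hc⟩ := Finset.mem_filter.mp hT
        rw [Finset.mem_singleton]
        exact ((hmem T hT𝒯).2.2 Q hQ hc).symm
      calc ∑ T ∈ 𝒯.filter (fun T => sq T ⊆ sq Q), w T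
          ≤ ∑ T ∈ ({Q} : Finset ι), w T :=
            Finset.sum_le_sum_of_subset_of_nonneg hsub (fun i _ _ => (hpos i).le)
        _ = w Q := Finset.sum_singleton _ _
    · have h1 := hL (𝒯.filter (fun T => sq T ⊆ sq Q)) (Finset.filter_subset _ _)
      have h2 : 𝒮.filter (fun S => ∃ T ∈ 𝒯.filter (fun T => sq T ⊆ sq Q), sq S ⊆ sq T) ⊆
          𝒮.filter (fun S => sq S ⊆ sq Q) := by
        intro S hS
        obtain ⟨hS𝒮, T, hT, hST⟩ := Finset.mem_filter.mp hS
        obtain ⟨_, hTQ⟩ := Finset.mem_filter.mp hT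
        exact Finset.mem_filter.mpr ⟨hS𝒮, hST.trans hTQ⟩
      have h3 : ∑ S ∈ 𝒮.filter (fun S => sq S ⊆ sq Q), w S < w Q := by
        unfold heavy at hQ
        exact not_le.mp hQ
      exact h1.trans ((Finset.sum_le_sum_of_subset_of_nonneg h2
        (fun i _ _ => (hpos i).le)).trans h3.le)
  · exact (hL 𝒯 subset_rfl).trans (Finset.sum_le_sum_of_subset_of_nonneg
      (Finset.filter_subset _ _) (fun i _ _ => (hpos i).le))

end Stop


lemma sl_rpow (k : ℤ) (t : ℝ) : sl k ^ t = (2:ℝ) ^ ((-k : ℝ) * t) := by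
  rw [sl, ← Real.rpow_intCast 2 (-k), ← Real.rpow_mul (by norm_num : (0:ℝ) ≤ 2)]
  norm_num

lemma exists_scale_bound (t : ℝ) (ht : 0 < t) (W : ℝ) :
    ∃ N₀ : ℤ, ∀ k : ℤ, sl k ^ t ≤ W → N₀ ≤ k := by
  obtain ⟨n, hn⟩ := exists_nat_gt W
  refine ⟨-⌈(n:ℝ)/t⌉, ?_⟩
  intro k hk
  have h2 : sl k ^ t < (2:ℝ) ^ ((n:ℝ)) := by
    refine lt_of_le_of_lt hk (lt_of_lt_of_le hn ?_)
    rw [Real.rpow_natCast]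
    exact_mod_cast (Nat.lt_two_pow_self (n := n)).le
  rw [sl_rpow] at h2
  have h3 : (-k:ℝ) * t < n := (Real.rpow_lt_rpow_left_iff (by norm_num : (1:ℝ) < 2)).mp h2
  have h4 : (-k : ℝ) < (n:ℝ)/t := (lt_div_iff₀ ht).mpr h3
  have h6 : -k < ⌈(n:ℝ)/t⌉ := by exact_mod_cast h4.trans_le (Int.le_ceil _)
  omega

lemma J_cover {k n : ℤ} {u : ℝ} (h1 : sl k * n < u) (h2 : u < sl k * (n + 3)) :
    ∃ i : ℕ, i < 3 ∧ u ∈ J k (n + i) := by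
  have hs := sl_pos k
  set j := ⌊u / sl k⌋ with hj
  have hj1 : n ≤ j := Int.le_floor.mpr (le_of_lt ((lt_div_iff₀' hs).mpr h1))
  have hj2 : j < n + 3 := Int.floor_lt.mpr (by push_cast; exact (div_lt_iff₀' hs).mpr h2)
  refine ⟨(j - n).toNat, by omega, ?_⟩

  have hz : n + ((j - n).toNat : ℤ) = j := by omega
  have hcast : ((n + ((j - n).toNat : ℤ) : ℤ) : ℝ) = (j : ℝ) := by rw [hz]
  constructor
  · push_cast [hcast]
    rw [← le_div_iff₀' hs]
    exact_mod_cast Int.floor_le (u / sl k)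
  · push_cast [hcast]
    rw [← div_le_iff₀' hs]
    have := Int.lt_floor_add_one (u / sl k)
    push_cast at this ⊢
    linarith

lemma nine (t : ℝ) (ht : 0 < t) (S : Set (ℝ × ℝ)) (hd : EMetric.diam S ≠ ⊤)
    {δ : ℝ} (hδ : 0 < δ) :
    ∃ (U : Set (ℝ × ℝ)) (F : Finset ι), IsOpen U ∧ S ⊆ U ∧ (U ⊆ ⋃ P ∈ F, sq P) ∧
      ∑ P ∈ F, ENNReal.ofReal (sl P.1 ^ t) ≤ 9 * EMetric.diam S ^ t + ENNReal.ofReal δ := by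
  rcases S.eq_empty_or_nonempty with rfl | hne
  · exact ⟨∅, ∅, isOpen_empty, subset_rfl, by simp, by simp⟩
  set d := (EMetric.diam S).toReal with hdd
  have hd0 : 0 ≤ d := ENNReal.toReal_nonneg
  have hδ9 : 0 < δ / 9 := by linarith
  have hk : ∃ k : ℤ, d < 2 * sl k ∧
      ENNReal.ofReal (sl k ^ t) ≤ EMetric.diam S ^ t + ENNReal.ofReal (δ / 9) := by
    by_cases hd' : 0 < d
    · obtain ⟨n, hn1, hn2⟩ := exists_mem_Ico_zpow hd' (by norm_num : (1:ℝ) < 2)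
      have hsl : sl (-n) = (2:ℝ) ^ n := by rw [sl]; norm_num
      refine ⟨-n, ?_, ?_⟩
      · rw [hsl]
        have : (2:ℝ) ^ (n + 1) = 2 ^ n * 2 := zpow_add_one₀ (by norm_num) n
        have h2 := hn2
        rw [this] at h2
        linarith
      · have h1 : sl (-n) ^ t ≤ d ^ t := by
          apply Real.rpow_le_rpow (sl_pos _).le _ ht.le
          rw [hsl]; exact hn1
        have h2 : ENNReal.ofReal (d ^ t) = EMetric.diam S ^ t := by
          rw [← ENNReal.ofReal_rpow_of_nonneg hd0 ht.le, hdd, ENNReal.ofReal_toReal hd]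
        calc ENNReal.ofReal (sl (-n) ^ t) ≤ ENNReal.ofReal (d ^ t) := ENNReal.ofReal_le_ofReal h1
          _ = EMetric.diam S ^ t := h2
          _ ≤ _ := le_self_add
    · have hd0' : d = 0 := le_antisymm (not_lt.mp hd') hd0
      set c := min 1 ((δ/9) ^ t⁻¹) with hc
      have hcpos : 0 < c := lt_min one_pos (Real.rpow_pos_of_pos hδ9 _)
      obtain ⟨n, hn1, _⟩ := exists_mem_Ico_zpow hcpos (by norm_num : (1:ℝ) < 2)
      refine ⟨-n, by rw [hd0']; have := sl_pos (-n); linarith, ?_⟩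
      have hsl : sl (-n) ≤ c := by rw [sl]; push_cast; simpa using hn1
      have h1 : sl (-n) ^ t ≤ c ^ t := Real.rpow_le_rpow (sl_pos _).le hsl ht.le
      have h2 : c ^ t ≤ δ / 9 := by
        calc c ^ t ≤ ((δ/9) ^ t⁻¹) ^ t :=
              Real.rpow_le_rpow hcpos.le (min_le_right _ _) ht.le
          _ = δ / 9 := by
              rw [← Real.rpow_mul hδ9.le, inv_mul_cancel₀ (ne_of_gt ht), Real.rpow_one]
      exact le_trans (ENNReal.ofReal_le_ofReal (h1.trans h2)) le_add_self
  obtain ⟨k, hk1, hk2⟩ := hk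
  have hslk := sl_pos k
  obtain ⟨p, hp⟩ := hne
  have hbd : ∀ x ∈ S, ∀ y ∈ S, |x.1 - y.1| ≤ d ∧ |x.2 - y.2| ≤ d := by
    intro x hx y hy
    have h1 : dist x y ≤ d := by
      rw [dist_edist, hdd]
      exact ENNReal.toReal_mono hd (EMetric.edist_le_diam_of_mem hx hy)
    constructor
    · calc |x.1 - y.1| = dist x.1 y.1 := (Real.dist_eq _ _).symm
        _ ≤ dist x y := by rw [Prod.dist_eq]; exact le_max_left _ _
        _ ≤ d := h1
    · calc |x.2 - y.2| = dist x.2 y.2 := (Real.dist_eq _ _).symm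
        _ ≤ dist x y := by rw [Prod.dist_eq]; exact le_max_right _ _
        _ ≤ d := h1
  -- bounds for both coordinate projections
  have key : ∀ f : ℝ × ℝ → ℝ, (∀ x ∈ S, ∀ y ∈ S, |f x - f y| ≤ d) →
      ∃ n : ℤ, ∀ x ∈ S, sl k * n < f x ∧ f x < sl k * (n + 3) := by
    intro f hf
    have hne' : (f '' S).Nonempty := ⟨f p, ⟨p, hp, rfl⟩⟩
    have hbdd : BddBelow (f '' S) := ⟨f p - d, by
      rintro _ ⟨x, hx, rfl⟩
      have := abs_le.mp (hf x hx p hp)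
      linarith [this.2]⟩
    have hbdd' : BddAbove (f '' S) := ⟨f p + d, by
      rintro _ ⟨x, hx, rfl⟩
      have := abs_le.mp (hf x hx p hp)
      linarith [this.1]⟩
    set a := sInf (f '' S) with ha
    set b := sSup (f '' S) with hb
    have hax : ∀ x ∈ S, a ≤ f x := fun x hx => csInf_le hbdd ⟨x, hx, rfl⟩
    have hxb : ∀ x ∈ S, f x ≤ b := fun x hx => le_csSup hbdd' ⟨x, hx, rfl⟩
    have hba : b - a ≤ d := by
      have : b ≤ a + d := by
        apply csSup_le hne'
        rintro _ ⟨x, hx, rfl⟩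
        have : f x - d ≤ a := by
          apply le_csInf hne'
          rintro _ ⟨y, hy, rfl⟩
          have := abs_le.mp (hf x hx y hy)
          linarith [this.1]
        linarith
      linarith
    refine ⟨⌈a / sl k⌉ - 1, ?_⟩
    intro x hx
    constructor
    · have h1 : ((⌈a / sl k⌉ - 1 : ℤ) : ℝ) < a / sl k := by
        push_cast
        have := Int.ceil_lt_add_one (a / sl k)
        linarith
      have := (mul_lt_mul_of_pos_left h1 hslk).trans_le
        (le_of_eq (mul_div_cancel₀ a (ne_of_gt hslk)))
      exact this.trans_le (hax x hx)
    · have h1 : b / sl k < ((⌈a / sl k⌉ - 1 : ℤ) : ℝ) + 3 := by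
        push_cast
        have h2 : a / sl k ≤ (⌈a / sl k⌉ : ℝ) := Int.le_ceil _
        have h3 : b / sl k ≤ a / sl k + d / sl k := by
          rw [← add_div, div_le_div_iff_of_pos_right hslk]
          linarith
        have h4 : d / sl k < 2 := by
          rw [div_lt_iff₀ hslk]
          linarith
        linarith
      have := (hxb x hx).trans_lt ((div_lt_iff₀ hslk).mp h1)
      rw [mul_comm] at this
      push_cast at this ⊢
      linarith
  obtain ⟨n1, hn1⟩ := key Prod.fst (fun x hx y hy => (hbd x hx y hy).1)
  obtain ⟨n2, hn2⟩ := key Prod.snd (fun x hx y hy => (hbd x hx y hy).2)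
  refine ⟨Ioo (sl k * n1) (sl k * (n1 + 3)) ×ˢ Ioo (sl k * n2) (sl k * (n2 + 3)),
    (Finset.range 3 ×ˢ Finset.range 3).image
      (fun ij => ((k, n1 + ij.1, n2 + ij.2) : ι)), isOpen_Ioo.prod isOpen_Ioo,
    ?_, ?_, ?_⟩
  · intro x hx
    exact ⟨⟨(hn1 x hx).1, (hn1 x hx).2⟩, ⟨(hn2 x hx).1, (hn2 x hx).2⟩⟩
  · rintro ⟨u, v⟩ ⟨⟨hu1, hu2⟩, ⟨hv1, hv2⟩⟩
    obtain ⟨i, hi, hui⟩ := J_cover hu1 hu2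
    obtain ⟨i', hi', hvi⟩ := J_cover hv1 hv2
    simp only [Set.mem_iUnion]
    refine ⟨(k, n1 + i, n2 + i'), ?_, ?_⟩
    · apply Finset.mem_image.mpr
      exact ⟨(i, i'), Finset.mem_product.mpr ⟨Finset.mem_range.mpr hi, Finset.mem_range.mpr hi'⟩, rfl⟩
    · rw [sq, sq_eq]
      exact ⟨hui, hvi⟩
  · have hconst : ∀ P ∈ (Finset.range 3 ×ˢ Finset.range 3).image
        (fun ij => ((k, n1 + ij.1, n2 + ij.2) : ι)),
        ENNReal.ofReal (sl P.1 ^ t) = ENNReal.ofReal (sl k ^ t) := by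
      intro P hP
      obtain ⟨ij, _, rfl⟩ := Finset.mem_image.mp hP
      rfl
    rw [Finset.sum_congr rfl hconst, Finset.sum_const]
    have hcard : ((Finset.range 3 ×ˢ Finset.range 3).image
        (fun ij => ((k, n1 + ij.1, n2 + ij.2) : ι))).card ≤ 9 := by
      refine le_trans (Finset.card_image_le) ?_
      rw [Finset.card_product, Finset.card_range]
    calc _ ≤ 9 • ENNReal.ofReal (sl k ^ t) := nsmul_le_nsmul_left zero_le hcard
      _ = 9 * ENNReal.ofReal (sl k ^ t) := by rw [nsmul_eq_mul]; norm_num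
      _ ≤ 9 * (EMetric.diam S ^ t + ENNReal.ofReal (δ / 9)) := by
          exact mul_le_mul_right hk2 9
      _ = 9 * EMetric.diam S ^ t + 9 * ENNReal.ofReal (δ / 9) := by ring
      _ = 9 * EMetric.diam S ^ t + ENNReal.ofReal δ := by
          congr 1
          rw [show ((9:ℝ≥0∞)) = ENNReal.ofReal 9 by simp,
            ← ENNReal.ofReal_mul (by norm_num : (0:ℝ) ≤ 9)]
          congr 1
          ring


lemma sum_biUnion_le' {κ : Type*} (I : Finset κ) (F : κ → Finset ι) (f : ι → ℝ≥0∞) :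
    ∑ P ∈ I.biUnion F, f P ≤ ∑ i ∈ I, ∑ P ∈ F i, f P := by
  classical
  induction I using Finset.induction_on with
  | empty => simp
  | insert a s ha ih =>
    rw [Finset.biUnion_insert, Finset.sum_insert ha]
    refine le_trans ?_ (add_le_add_right ih _)
    rw [← Finset.union_sdiff_self_eq_union, Finset.sum_union Finset.disjoint_sdiff]
    exact add_le_add_right (Finset.sum_le_sum_of_subset (Finset.sdiff_subset)) _

end PackAux

open PackAux in
theorem packing_minimizer' (E : Set (ℝ × ℝ)) (hE : IsCompact E)
    (hE' : E ⊆ Ioo (0:ℝ) 1 ×ˢ Ioo (0:ℝ) 1)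
    (t : ℝ) (ht0 : 0 < t) (ht2 : t < 2) (ε : ℝ) (hε : 0 < ε) :
    ∃ 𝒯 : Finset ι,
      (∀ T ∈ 𝒯, (sq T ∩ E).Nonempty) ∧
      (∀ T ∈ 𝒯, ∀ T' ∈ 𝒯, T ≠ T' → Disjoint (interior (sq T)) (interior (sq T'))) ∧
      (E ⊆ ⋃ T ∈ 𝒯, sq T) ∧
      (∀ Q : ι, ∑ T ∈ 𝒯.filter (fun T => sq T ⊆ sq Q), sl T.1 ^ t ≤ sl Q.1 ^ t) ∧
      (∑ T ∈ 𝒯, ENNReal.ofReal (sl T.1 ^ t))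
        ≤ 9 * (hausdorffContent t E + ENNReal.ofReal ε) := by
  classical
  set ℋ := hausdorffContent t E with hH
  -- finiteness of the content
  have hfin : ℋ ≠ ⊤ := by
    set B0 : ℕ → Set (ℝ × ℝ) :=
      fun i => if i = 0 then Icc (0:ℝ) 1 ×ˢ Icc (0:ℝ) 1 else (∅ : Set (ℝ × ℝ)) with hB0
    have hcov : E ⊆ ⋃ i, B0 i := by
      intro x hx
      refine Set.mem_iUnion.mpr ⟨0, ?_⟩
      have h := hE' hx
      simp only [hB0, if_pos rfl]
      exact ⟨⟨h.1.1.le, h.1.2.le⟩, ⟨h.2.1.le, h.2.2.le⟩⟩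
    have hle : ℋ ≤ ∑' i, EMetric.diam (B0 i) ^ t := by
      rw [hH, hausdorffContent]
      exact iInf₂_le B0 hcov
    have hsum : (∑' i, EMetric.diam (B0 i) ^ t)
        = EMetric.diam (Icc (0:ℝ) 1 ×ˢ Icc (0:ℝ) 1) ^ t := by
      rw [tsum_eq_single 0]
      · simp [hB0]
      · intro b hb
        simp [hB0, hb, EMetric.diam, Metric.ediam_empty, ENNReal.zero_rpow_of_pos ht0, ht0]
    have hbdd : EMetric.diam (Icc (0:ℝ) 1 ×ˢ Icc (0:ℝ) 1) ≠ ⊤ :=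
      ((Metric.isBounded_Icc (0:ℝ) 1).prod (Metric.isBounded_Icc (0:ℝ) 1)).ediam_ne_top
    exact ne_top_of_le_ne_top (ENNReal.rpow_ne_top_of_nonneg ht0.le hbdd)
      (hle.trans_eq hsum)
  -- near-optimal cover
  obtain ⟨B, hBcov, hBsum⟩ : ∃ B : ℕ → Set (ℝ × ℝ), E ⊆ ⋃ i, B i ∧
      ∑' i, EMetric.diam (B i) ^ t < ℋ + ENNReal.ofReal (ε/2) := by
    have hlt : ℋ < ℋ + ENNReal.ofReal (ε/2) :=
      ENNReal.lt_add_right hfin (ne_of_gt (ENNReal.ofReal_pos.mpr (by linarith)))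
    have h2 := hlt
    nth_rewrite 1 [hH] at h2
    unfold hausdorffContent at h2
    obtain ⟨B, h3⟩ := iInf_lt_iff.mp h2
    obtain ⟨hBcov, h4⟩ := iInf_lt_iff.mp h3
    exact ⟨B, hBcov, h4⟩
  have hStop : ℋ + ENNReal.ofReal (ε/2) < ⊤ :=
    ENNReal.add_lt_top.mpr ⟨lt_top_iff_ne_top.mpr hfin, ENNReal.ofReal_lt_top⟩
  have hBfin : ∀ i, EMetric.diam (B i) ≠ ⊤ := by
    intro i hcontra
    have h1 : EMetric.diam (B i) ^ t ≤ ∑' j, EMetric.diam (B j) ^ t := ENNReal.le_tsum i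
    rw [hcontra, ENNReal.top_rpow_of_pos ht0] at h1
    exact absurd (lt_of_le_of_lt h1 (hBsum.trans hStop)) (lt_irrefl ⊤)
  -- nine-squares covers
  have hnine : ∀ i : ℕ, ∃ (U : Set (ℝ × ℝ)) (F : Finset ι), IsOpen U ∧ B i ⊆ U ∧
      (U ⊆ ⋃ P ∈ F, sq P) ∧ ∑ P ∈ F, ENNReal.ofReal (sl P.1 ^ t) ≤
        9 * EMetric.diam (B i) ^ t + ENNReal.ofReal (ε/4 * (1/2)^i) :=
    fun i => nine t ht0 (B i) (hBfin i) (by positivity)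
  choose U F hUopen hBU hUF hmassF using hnine
  have hEcov : E ⊆ ⋃ i, U i := hBcov.trans (Set.iUnion_mono hBU)
  obtain ⟨I, hI⟩ := hE.elim_finite_subcover U hUopen hEcov
  set 𝒮₀ := I.biUnion F with h𝒮₀
  have hcov₀ : E ⊆ ⋃ P ∈ 𝒮₀, sq P := by
    intro x hx
    obtain ⟨i, hiI, hxU⟩ := Set.mem_iUnion₂.mp (hI hx)
    obtain ⟨P, hPF, hxP⟩ := Set.mem_iUnion₂.mp (hUF i hxU)
    exact Set.mem_iUnion₂.mpr ⟨P, Finset.mem_biUnion.mpr ⟨i, hiI, hPF⟩, hxP⟩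
  -- geometric series bound
  have hgeom : ∑ i ∈ I, ENNReal.ofReal (ε/4 * (1/2)^i) ≤ ENNReal.ofReal (ε/2) := by
    have h12 : ENNReal.ofReal (1/2 : ℝ) = 2⁻¹ := by
      rw [one_div, ENNReal.ofReal_inv_of_pos (by norm_num : (0:ℝ) < 2)]
      norm_num
    have hterm : ∀ i : ℕ, ENNReal.ofReal (ε/4 * (1/2)^i)
        = ENNReal.ofReal (ε/4) * (2⁻¹ : ℝ≥0∞)^i := by
      intro i
      rw [ENNReal.ofReal_mul (by positivity), ENNReal.ofReal_pow (by norm_num), h12]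
    calc ∑ i ∈ I, ENNReal.ofReal (ε/4 * (1/2)^i)
        ≤ ∑' i : ℕ, ENNReal.ofReal (ε/4 * (1/2)^i) := ENNReal.sum_le_tsum I
      _ = ENNReal.ofReal (ε/4) * ∑' i : ℕ, (2⁻¹ : ℝ≥0∞)^i := by
          rw [tsum_congr hterm, ENNReal.tsum_mul_left]
      _ = ENNReal.ofReal (ε/4) * 2 := by
          rw [ENNReal.tsum_geometric, ENNReal.one_sub_inv_two, inv_inv]
      _ = ENNReal.ofReal (ε/2) := by
          rw [show (2:ℝ≥0∞) = ENNReal.ofReal 2 by simp,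
            ← ENNReal.ofReal_mul (by positivity)]
          congr 1
          ring
  -- mass of 𝒮₀
  have hmass₀ : ∑ P ∈ 𝒮₀, ENNReal.ofReal (sl P.1 ^ t)
      ≤ 9 * (ℋ + ENNReal.ofReal (ε/2)) + ENNReal.ofReal (ε/2) := by
    calc ∑ P ∈ 𝒮₀, ENNReal.ofReal (sl P.1 ^ t)
        ≤ ∑ i ∈ I, ∑ P ∈ F i, ENNReal.ofReal (sl P.1 ^ t) := sum_biUnion_le' I F _
      _ ≤ ∑ i ∈ I, (9 * EMetric.diam (B i) ^ t + ENNReal.ofReal (ε/4 * (1/2)^i)) :=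
          Finset.sum_le_sum (fun i _ => hmassF i)
      _ = 9 * ∑ i ∈ I, EMetric.diam (B i) ^ t + ∑ i ∈ I, ENNReal.ofReal (ε/4 * (1/2)^i) := by
          rw [Finset.sum_add_distrib, Finset.mul_sum]
      _ ≤ 9 * (ℋ + ENNReal.ofReal (ε/2)) + ENNReal.ofReal (ε/2) := by
          refine add_le_add (mul_le_mul_right ?_ 9) hgeom
          exact (ENNReal.sum_le_tsum I).trans hBsum.le
  -- keep only squares meeting E
  set 𝒮 := 𝒮₀.filter (fun P => (sq P ∩ E).Nonempty) with h𝒮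
  have hcov𝒮 : E ⊆ ⋃ P ∈ 𝒮, sq P := by
    intro x hx
    obtain ⟨P, hP, hxP⟩ := Set.mem_iUnion₂.mp (hcov₀ hx)
    exact Set.mem_iUnion₂.mpr ⟨P, Finset.mem_filter.mpr ⟨hP, ⟨x, hxP, hx⟩⟩, hxP⟩
  have hmass𝒮 : ∑ P ∈ 𝒮, ENNReal.ofReal (sl P.1 ^ t)
      ≤ 9 * (ℋ + ENNReal.ofReal (ε/2)) + ENNReal.ofReal (ε/2) :=
    le_trans (Finset.sum_le_sum_of_subset (Finset.filter_subset _ _)) hmass₀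
  -- stopping time
  have hpos : ∀ P : ι, 0 < sl P.1 ^ t := fun P => Real.rpow_pos_of_pos (sl_pos _) _
  obtain ⟨N₀, hN₀⟩ := exists_scale_bound t ht0 (∑ S ∈ 𝒮, sl S.1 ^ t)
  have hsc : ∀ Q, heavy (fun P => sl P.1 ^ t) 𝒮 Q → N₀ ≤ Q.1 := by
    intro Q hQ
    unfold heavy at hQ
    exact hN₀ _ (le_trans hQ (Finset.sum_le_sum_of_subset_of_nonneg
      (Finset.filter_subset _ _) (fun i _ _ => (hpos i).le)))
  obtain ⟨𝒯, hT1, hT2, hT3, hT4, hT5⟩ :=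
    stopping (w := fun P => sl P.1 ^ t) (𝒮 := 𝒮) (N₀ := N₀) hpos hsc
  refine ⟨𝒯, ?_, hT3, ?_, hT4, ?_⟩
  · intro T hT
    obtain ⟨S, hS, hsub⟩ := hT1 T hT
    obtain ⟨x, hx1, hx2⟩ := (Finset.mem_filter.mp hS).2
    exact ⟨x, hsub hx1, hx2⟩
  · intro x hx
    obtain ⟨S, hS, hxS⟩ := Set.mem_iUnion₂.mp (hcov𝒮 hx)
    obtain ⟨T, hT, hsub⟩ := hT2 S hS
    exact Set.mem_iUnion₂.mpr ⟨T, hT, hsub hxS⟩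
  · have hofsum : ∑ T ∈ 𝒯, ENNReal.ofReal (sl T.1 ^ t)
        ≤ ∑ P ∈ 𝒮, ENNReal.ofReal (sl P.1 ^ t) := by
      rw [← ENNReal.ofReal_sum_of_nonneg (fun i _ => (hpos i).le),
        ← ENNReal.ofReal_sum_of_nonneg (fun i _ => (hpos i).le)]
      exact ENNReal.ofReal_le_ofReal hT5
    refine (hofsum.trans hmass𝒮).trans ?_
    -- 9 (ℋ + ε/2) + ε/2 ≤ 9 (ℋ + ε)
    have e9 : (9 : ℝ≥0∞) = ENNReal.ofReal (9:ℝ) := by simp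
    rw [mul_add, mul_add, add_assoc]
    refine add_le_add_right ?_ _
    rw [e9, ← ENNReal.ofReal_mul (by norm_num), ← ENNReal.ofReal_mul (by norm_num),
      ← ENNReal.ofReal_add (by positivity) (by positivity)]
    exact ENNReal.ofReal_le_ofReal (by linarith)


/-- **Approximation of Hausdorff content by a minimizing dyadic covering.**
Given compact `E ⊆ (0,1)²`, `0 < t < 2` and `ε > 0`, there is a finite family
of closed dyadic squares, each intersecting `E`, with pairwise disjoint
interiors, covering `E`, with `t`-Carleson packing norm at most `1`, and with
total `t`-mass at most `9 (ℋ^t_∞(E) + ε)`. -/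
theorem packing_minimizer (E : Set (ℝ × ℝ)) (hE : IsCompact E)
    (hE' : E ⊆ Ioo (0:ℝ) 1 ×ˢ Ioo (0:ℝ) 1)
    (t : ℝ) (ht0 : 0 < t) (ht2 : t < 2) (ε : ℝ) (hε : 0 < ε) :
    ∃ (M : ℕ) (k : Fin M → ℤ) (m : Fin M → ℤ × ℤ),
      (∀ i, (dyadicSquare (k i) (m i) ∩ E).Nonempty) ∧
      (∀ i j, i ≠ j →
        Disjoint (interior (dyadicSquare (k i) (m i))) (interior (dyadicSquare (k j) (m j)))) ∧
      E ⊆ ⋃ i, dyadicSquare (k i) (m i) ∧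
      (∀ (k' : ℤ) (m' : ℤ × ℤ),
        (∑ i, if dyadicSquare (k i) (m i) ⊆ dyadicSquare k' m'
          then ((2 : ℝ) ^ (-(k i)) : ℝ) ^ t else 0) ≤ ((2 : ℝ) ^ (-k') : ℝ) ^ t) ∧
      (∑ i, ENNReal.ofReal (((2 : ℝ) ^ (-(k i)) : ℝ) ^ t))
        ≤ 9 * (hausdorffContent t E + ENNReal.ofReal ε) := by
  classical
  obtain ⟨𝒯, h1, h2, h3, h4, h5⟩ := packing_minimizer' E hE hE' t ht0 ht2 ε hε
  set e := Fintype.equivFin {x // x ∈ 𝒯} with he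
  set g : Fin (Fintype.card {x // x ∈ 𝒯}) → PackAux.ι := fun i => (e.symm i : PackAux.ι) with hg
  have hgmem : ∀ i, g i ∈ 𝒯 := fun i => (e.symm i).2
  have hginj : Function.Injective g := by
    intro i j h
    have : e.symm i = e.symm j := Subtype.ext h
    exact e.symm.injective this
  have hsq : ∀ i, dyadicSquare (g i).1 (g i).2 = PackAux.sq (g i) := fun _ => rfl
  have hsumR : ∀ f : PackAux.ι → ℝ, (∑ i, f (g i)) = ∑ T ∈ 𝒯, f T := by
    intro f
    rw [← Finset.sum_coe_sort 𝒯 f]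
    exact Equiv.sum_comp e.symm (fun x : {x // x ∈ 𝒯} => f ↑x)
  have hsumE : ∀ f : PackAux.ι → ℝ≥0∞, (∑ i, f (g i)) = ∑ T ∈ 𝒯, f T := by
    intro f
    rw [← Finset.sum_coe_sort 𝒯 f]
    exact Equiv.sum_comp e.symm (fun x : {x // x ∈ 𝒯} => f ↑x)
  refine ⟨Fintype.card {x // x ∈ 𝒯}, fun i => (g i).1, fun i => (g i).2, ?_, ?_, ?_, ?_, ?_⟩
  · intro i
    rw [hsq]
    exact h1 (g i) (hgmem i)
  · intro i j hij
    rw [hsq, hsq]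
    exact h2 (g i) (hgmem i) (g j) (hgmem j) (fun h => hij (hginj h))
  · intro x hx
    obtain ⟨T, hT, hxT⟩ := Set.mem_iUnion₂.mp (h3 hx)
    refine Set.mem_iUnion.mpr ⟨e ⟨T, hT⟩, ?_⟩
    rw [hsq]
    have : g (e ⟨T, hT⟩) = T := by rw [hg]; simp
    rw [this]
    exact hxT
  · intro k' m'
    have key := h4 (k', m')
    calc (∑ i, if dyadicSquare (g i).1 (g i).2 ⊆ dyadicSquare k' m'
            then ((2 : ℝ) ^ (-(g i).1) : ℝ) ^ t else 0)
        = ∑ T ∈ 𝒯, (if PackAux.sq T ⊆ PackAux.sq ((k', m') : PackAux.ι)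
            then PackAux.sl T.1 ^ t else 0) :=
          hsumR (fun P => if PackAux.sq P ⊆ PackAux.sq ((k', m') : PackAux.ι)
            then PackAux.sl P.1 ^ t else 0)
      _ = ∑ T ∈ 𝒯.filter (fun T => PackAux.sq T ⊆ PackAux.sq ((k', m') : PackAux.ι)),
            PackAux.sl T.1 ^ t := (Finset.sum_filter _ _).symm
      _ ≤ ((2 : ℝ) ^ (-k') : ℝ) ^ t := key
  · calc (∑ i, ENNReal.ofReal (((2 : ℝ) ^ (-(g i).1) : ℝ) ^ t))
        = ∑ T ∈ 𝒯, ENNReal.ofReal (PackAux.sl T.1 ^ t) :=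
          hsumE (fun P => ENNReal.ofReal (PackAux.sl P.1 ^ t))
      _ ≤ 9 * (hausdorffContent t E + ENNReal.ofReal ε) := h5
end

section
/- Suppose that for constants C, c > 0 and exponents determined by a function F one has, for all measurable sets F₀ (in place of F) and G with F₀, G ⊆ P̄: whenever w(G) < 8 w(F₀), there exists F₁ ⊆ F₀ with w(F₁) ≥ w(F₀)/2 and ∫_G [T χ_{F₁}] w dx ≤ C min{w(F₀), w(G)}; and whenever w(G) ≥ 8 w(F₀), the estimate holds with F₁ = F₀. Then for all F, G ⊆ P̄, ∫_G [T χ_F] w dx ≤ C' log(2 + w(F)/w(G)) · min{w(F), w(G)}, and consequently ∫_G [T χ_F] w dx ≤ C(p) w(F)^{1/p} w(G)^{1−1/p} for every 1 < p < ∞. -/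
open MeasureTheory Set ENNReal

private lemma aux_log_ratio (r : ℝ) (hr : 1/8 < r) :
    ((⌈Real.logb 2 (8*r)⌉₊ : ℝ) + 1) ≤ 6 / Real.log 2 * Real.log (2 + r) := by
  have hl2 : 0 < Real.log 2 := Real.log_pos (by norm_num)
  have hr0 : 0 < r := lt_trans (by norm_num) hr
  have h8r : 1 < 8 * r := by nlinarith
  have hlb0 : 0 ≤ Real.logb 2 (8*r) := Real.logb_nonneg (by norm_num) h8r.le
  have hceil : (⌈Real.logb 2 (8*r)⌉₊ : ℝ) ≤ Real.logb 2 (8*r) + 1 :=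
    (Nat.ceil_lt_add_one hlb0).le
  have hlog8r : Real.log (8*r) ≤ 3 * Real.log 2 + Real.log (2 + r) := by
    have h1 : Real.log (8*r) = Real.log 8 + Real.log r :=
      Real.log_mul (by norm_num) hr0.ne'
    have h8 : Real.log 8 = 3 * Real.log 2 := by
      rw [show (8:ℝ) = 2^3 by norm_num, Real.log_pow]; push_cast; ring
    have hmono : Real.log r ≤ Real.log (2 + r) :=
      Real.log_le_log hr0 (by linarith)
    linarith
  have hlogb : Real.logb 2 (8*r) = Real.log (8*r) / Real.log 2 := rfl
  have hge : Real.log 2 ≤ Real.log (2 + r) := Real.log_le_log (by norm_num) (by linarith)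
  have key : Real.logb 2 (8*r) + 2 ≤ 6 / Real.log 2 * Real.log (2 + r) := by
    rw [hlogb]
    rw [div_add' _ _ _ hl2.ne', div_le_iff₀ hl2, div_mul_eq_mul_div, div_mul_eq_mul_div,
      le_div_iff₀ hl2]
    nlinarith
  linarith

private lemma aux_lp (p r : ℝ) (hp : 1 < p) (hr : 1 ≤ r) :
    Real.log (2+r) ≤ (p+3) * r^(1/p) := by
  have hr0 : 0 < r := by linarith
  have hrp : 1 ≤ r ^ (1/p) := Real.one_le_rpow hr (by positivity)
  have h1 : Real.log (2+r) ≤ Real.log (3*r) :=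
    Real.log_le_log (by linarith) (by nlinarith)
  have h2 : Real.log (3*r) = Real.log 3 + Real.log r :=
    Real.log_mul (by norm_num) hr0.ne'
  have h3 : Real.log 3 ≤ 2 := by
    have := Real.log_le_sub_one_of_pos (x := 3) (by norm_num); linarith
  have h4 : Real.log r = p * Real.log (r ^ (1/p)) := by
    rw [Real.log_rpow hr0]; field_simp
  have h5 : Real.log (r ^ (1/p)) ≤ r ^ (1/p) - 1 :=
    Real.log_le_sub_one_of_pos (by positivity)
  nlinarith [Real.log_nonneg hr]

/-- **Major-subset iteration scheme.** Let `T` be a positive operator on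
indicators (monotone and subadditive in the set argument) and `w` a measure,
finite on `P̄`. Suppose for all measurable `F₀, G ⊆ P̄`: if `w(G) < 8 w(F₀)`
there is a major subset `F₁ ⊆ F₀` with `w(F₁) ≥ w(F₀)/2` and
`∫_G T χ_{F₁} dw ≤ C min{w(F₀), w(G)}`; and if `w(G) ≥ 8 w(F₀)` the same
estimate holds with `F₁ = F₀`. Then for all `F, G ⊆ P̄`,
`∫_G T χ_F dw ≤ C' log(2 + w(F)/w(G)) min{w(F), w(G)}`, and consequently
`∫_G T χ_F dw ≤ C(p) w(F)^{1/p} w(G)^{1−1/p}` for every `1 < p < ∞`. -/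
theorem major_subset_iteration {X : Type*} [MeasurableSpace X]
    (w : Measure X) (Pbar : Set X) (hPbar : MeasurableSet Pbar) (hfin : w Pbar < ∞)
    (T : Set X → X → ℝ≥0∞)
    (hmeas : ∀ F : Set X, MeasurableSet F → Measurable (T F))
    (hmono : ∀ F F' : Set X, F ⊆ F' → ∀ x, T F x ≤ T F' x)
    (hsub : ∀ F F' : Set X, ∀ x, T (F ∪ F') x ≤ T F x + T F' x)
    (C : ℝ) (hC : 0 < C)
    (hmajor : ∀ F₀ G : Set X, MeasurableSet F₀ → MeasurableSet G →
      F₀ ⊆ Pbar → G ⊆ Pbar → w G < 8 * w F₀ →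
      ∃ F₁ : Set X, MeasurableSet F₁ ∧ F₁ ⊆ F₀ ∧ w F₀ / 2 ≤ w F₁ ∧
        (∫⁻ x in G, T F₁ x ∂w) ≤ ENNReal.ofReal C * min (w F₀) (w G))
    (heasy : ∀ F₀ G : Set X, MeasurableSet F₀ → MeasurableSet G →
      F₀ ⊆ Pbar → G ⊆ Pbar → 8 * w F₀ ≤ w G →
      (∫⁻ x in G, T F₀ x ∂w) ≤ ENNReal.ofReal C * min (w F₀) (w G)) :
    (∃ C' : ℝ, 0 < C' ∧
      ∀ F G : Set X, MeasurableSet F → MeasurableSet G → F ⊆ Pbar → G ⊆ Pbar →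
        (∫⁻ x in G, T F x ∂w)
          ≤ ENNReal.ofReal (C' * Real.log (2 + (w F).toReal / (w G).toReal)) *
              min (w F) (w G)) ∧
    (∀ p : ℝ, 1 < p → ∃ Cp : ℝ, 0 < Cp ∧
      ∀ F G : Set X, MeasurableSet F → MeasurableSet G → F ⊆ Pbar → G ⊆ Pbar →
        (∫⁻ x in G, T F x ∂w)
          ≤ ENNReal.ofReal Cp * w F ^ (1/p) * w G ^ (1 - 1/p)) := by
  -- The key iteration lemma.
  have key : ∀ n : ℕ, ∀ F G : Set X, MeasurableSet F → MeasurableSet G →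
      F ⊆ Pbar → G ⊆ Pbar → 8 * w F ≤ 2 ^ n * w G →
      (∫⁻ x in G, T F x ∂w) ≤ ((n : ℝ≥0∞) + 1) * ENNReal.ofReal C * min (w F) (w G) := by
    intro n
    induction n with
    | zero =>
      intro F G hF hG hFP hGP h
      simpa using heasy F G hF hG hFP hGP (by simpa using h)
    | succ n ih =>
      intro F G hF hG hFP hGP h
      by_cases hcase : 8 * w F ≤ w G
      · refine (heasy F G hF hG hFP hGP hcase).trans ?_
        calc ENNReal.ofReal C * min (w F) (w G)
            = 1 * ENNReal.ofReal C * min (w F) (w G) := by rw [one_mul]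
          _ ≤ ((n+1 : ℕ) + 1 : ℝ≥0∞) * ENNReal.ofReal C * min (w F) (w G) := by
              gcongr
              exact le_add_self
      · push_neg at hcase
        obtain ⟨F₁, hF₁m, hF₁sub, hhalf, hest⟩ := hmajor F G hF hG hFP hGP hcase
        set F₂ : Set X := F \ F₁ with hF₂def
        have hF₂m : MeasurableSet F₂ := hF.diff hF₁m
        have hF₂P : F₂ ⊆ Pbar := (diff_subset).trans hFP
        have hwF : w F ≠ ⊤ := ((measure_mono hFP).trans_lt hfin).ne
        have hwF₁ : w F₁ ≠ ⊤ := ((measure_mono hF₁sub).trans_lt (lt_of_le_of_ne le_top hwF)).ne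
        have hF₂le : w F₂ ≤ w F / 2 := by
          have hd : w F₂ = w F - w F₁ := measure_diff hF₁sub hF₁m.nullMeasurableSet hwF₁
          rw [hd]
          calc w F - w F₁ ≤ w F - w F / 2 := tsub_le_tsub_left hhalf _
            _ = w F / 2 := ENNReal.sub_half hwF
        have h2 : 8 * w F₂ ≤ 2 ^ n * w G := by
          have hd2 : 2 * w F₂ ≤ w F := by
            calc 2 * w F₂ ≤ 2 * (w F / 2) := mul_le_mul_right hF₂le 2
              _ = w F := ENNReal.mul_div_cancel' (by norm_num) (by norm_num)
          have h4 : 8 * w F₂ ≤ 4 * w F := by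
            calc 8 * w F₂ = 4 * (2 * w F₂) := by ring
              _ ≤ 4 * w F := mul_le_mul_right hd2 4
          have h8 : 2 * (4 * w F) ≤ 2 * (2 ^ n * w G) := by
            calc 2 * (4 * w F) = 8 * w F := by ring
              _ ≤ 2 ^ (n+1) * w G := h
              _ = 2 * (2 ^ n * w G) := by rw [pow_succ]; ring
          have := (ENNReal.mul_le_mul_iff_right (a := 2) (by norm_num) (by norm_num)).mp h8
          exact h4.trans this
        have hIH := ih F₂ G hF₂m hG hF₂P hGP h2
        have hminle : min (w F₂) (w G) ≤ min (w F) (w G) :=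
          min_le_min (measure_mono diff_subset) le_rfl
        have hFeq : F₁ ∪ F₂ = F := union_diff_cancel hF₁sub
        have hcover : ∀ x, T F x ≤ T F₁ x + T F₂ x := by
          intro x
          have h1 : T F x = T (F₁ ∪ F₂) x := by rw [hFeq]
          exact h1.le.trans (hsub F₁ F₂ x)
        calc (∫⁻ x in G, T F x ∂w) ≤ ∫⁻ x in G, (T F₁ x + T F₂ x) ∂w :=
              lintegral_mono hcover
          _ = (∫⁻ x in G, T F₁ x ∂w) + ∫⁻ x in G, T F₂ x ∂w :=
              lintegral_add_left ((hmeas F₁ hF₁m)) _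
          _ ≤ ENNReal.ofReal C * min (w F) (w G)
              + ((n : ℝ≥0∞) + 1) * ENNReal.ofReal C * min (w F₂) (w G) := add_le_add hest hIH
          _ ≤ ENNReal.ofReal C * min (w F) (w G)
              + ((n : ℝ≥0∞) + 1) * ENNReal.ofReal C * min (w F) (w G) := by gcongr
          _ = (((n:ℕ)+1 : ℕ) + 1 : ℝ≥0∞) * ENNReal.ofReal C * min (w F) (w G) := by
              push_cast; ring
  set C' : ℝ := 6 * C / Real.log 2 with hC'def
  have hl2 : 0 < Real.log 2 := Real.log_pos (by norm_num)
  have hC' : 0 < C' := by positivity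
  -- Part 1.
  have hmain : ∀ F G : Set X, MeasurableSet F → MeasurableSet G → F ⊆ Pbar → G ⊆ Pbar →
      (∫⁻ x in G, T F x ∂w)
        ≤ ENNReal.ofReal (C' * Real.log (2 + (w F).toReal / (w G).toReal)) *
            min (w F) (w G) := by
    intro F G hF hG hFP hGP
    by_cases hG0 : w G = 0
    · rw [Measure.restrict_eq_zero.mpr hG0]
      simp
    have hwGfin : w G ≠ ⊤ := ((measure_mono hGP).trans_lt hfin).ne
    have hwFfin : w F ≠ ⊤ := ((measure_mono hFP).trans_lt hfin).ne
    set f : ℝ := (w F).toReal with hfdef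
    set g : ℝ := (w G).toReal with hgdef
    have hg : 0 < g := ENNReal.toReal_pos hG0 hwGfin
    have hf0 : 0 ≤ f := ENNReal.toReal_nonneg
    have hr0 : 0 ≤ f / g := div_nonneg hf0 hg.le
    have hlog2le : Real.log 2 ≤ Real.log (2 + f / g) :=
      Real.log_le_log (by norm_num) (by linarith)
    by_cases hcase : 8 * w F ≤ w G
    · have hk := key 0 F G hF hG hFP hGP (by simpa using hcase)
      simp only [Nat.cast_zero, zero_add, one_mul] at hk
      refine hk.trans (mul_le_mul_left (ENNReal.ofReal_le_ofReal ?_) _)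
      have h6 : C' * Real.log 2 = 6 * C := by
        rw [hC'def]; field_simp
      nlinarith [mul_le_mul_of_nonneg_left hlog2le hC'.le]
    · push_neg at hcase
      have hF0 : w F ≠ 0 := by
        intro h0
        rw [h0, mul_zero] at hcase
        exact (not_lt_of_ge zero_le) hcase
      have hfpos : 0 < f := ENNReal.toReal_pos hF0 hwFfin
      have hglt : g < 8 * f := by
        have h8 : (8 * w F).toReal = 8 * f := by
          rw [ENNReal.toReal_mul]; norm_num; rfl
        have h := (ENNReal.toReal_lt_toReal hwGfin (by finiteness)).mpr hcase
        rwa [h8] at h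
      have hr : 1/8 < f / g := by
        rw [lt_div_iff₀ hg]; linarith
      set n : ℕ := ⌈Real.logb 2 (8*(f/g))⌉₊ with hndef
      have hpow : 8 * (f/g) ≤ (2:ℝ)^n := by
        have h1 : Real.logb 2 (8*(f/g)) ≤ (n:ℝ) := Nat.le_ceil _
        have h2 : (8*(f/g)) = (2:ℝ) ^ (Real.logb 2 (8*(f/g))) :=
          (Real.rpow_logb (by norm_num) (by norm_num) (by positivity)).symm
        calc 8*(f/g) = (2:ℝ) ^ (Real.logb 2 (8*(f/g))) := h2
          _ ≤ (2:ℝ) ^ ((n:ℕ):ℝ) := Real.rpow_le_rpow_of_exponent_le (by norm_num) h1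
          _ = (2:ℝ)^n := Real.rpow_natCast 2 n
      have hfg : 8 * f ≤ 2^n * g := by
        have hpow' : 8 * f / g ≤ (2:ℝ)^n := by rwa [← mul_div_assoc] at hpow
        have := (div_le_iff₀ hg).mp hpow'
        linarith
      have hENN : 8 * w F ≤ 2 ^ n * w G := by
        calc 8 * w F = ENNReal.ofReal (8 * f) := by
              rw [ENNReal.ofReal_mul (by norm_num), ENNReal.ofReal_toReal hwFfin]
              norm_num
          _ ≤ ENNReal.ofReal (2^n * g) := ENNReal.ofReal_le_ofReal hfg
          _ = 2^n * w G := by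
              rw [ENNReal.ofReal_mul (by positivity), ENNReal.ofReal_toReal hwGfin,
                ENNReal.ofReal_pow (by norm_num)]
              norm_num
      have hk := key n F G hF hG hFP hGP hENN
      refine hk.trans (mul_le_mul_left ?_ _)
      have hreal : ((n:ℝ)+1) * C ≤ C' * Real.log (2 + f/g) := by
        have haux := aux_log_ratio (f/g) hr
        have hC'eq : C' * Real.log (2 + f/g) = C * (6 / Real.log 2 * Real.log (2 + f/g)) := by
          rw [hC'def]; ring
        rw [hC'eq, hndef]
        nlinarith
      calc ((n:ℝ≥0∞)+1) * ENNReal.ofReal C = ENNReal.ofReal (((n:ℝ)+1) * C) := by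
            rw [ENNReal.ofReal_mul (by positivity)]
            congr 1
            rw [ENNReal.ofReal_add (by positivity) zero_le_one]
            simp
        _ ≤ ENNReal.ofReal (C' * Real.log (2 + f/g)) := ENNReal.ofReal_le_ofReal hreal
  refine ⟨⟨C', hC', hmain⟩, ?_⟩
  -- Part 2.
  intro p hp
  refine ⟨C' * (p + 3), by positivity, ?_⟩
  intro F G hF hG hFP hGP
  by_cases hG0 : w G = 0
  · rw [Measure.restrict_eq_zero.mpr hG0]
    simp
  have hwGfin : w G ≠ ⊤ := ((measure_mono hGP).trans_lt hfin).ne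
  have hwFfin : w F ≠ ⊤ := ((measure_mono hFP).trans_lt hfin).ne
  have h1 := hmain F G hF hG hFP hGP
  by_cases hF0 : w F = 0
  · rw [hF0, min_eq_left zero_le, mul_zero] at h1
    exact h1.trans zero_le
  obtain ⟨f, hf0, hFof⟩ : ∃ f : ℝ, 0 ≤ f ∧ w F = ENNReal.ofReal f :=
    ⟨(w F).toReal, ENNReal.toReal_nonneg, (ENNReal.ofReal_toReal hwFfin).symm⟩
  obtain ⟨g, hg0, hGof⟩ : ∃ g : ℝ, 0 ≤ g ∧ w G = ENNReal.ofReal g :=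
    ⟨(w G).toReal, ENNReal.toReal_nonneg, (ENNReal.ofReal_toReal hwGfin).symm⟩
  have hf : 0 < f := by
    rcases hf0.lt_or_eq with h | h
    · exact h
    · exact absurd (by rw [hFof, ← h, ENNReal.ofReal_zero]) hF0
  have hg : 0 < g := by
    rcases hg0.lt_or_eq with h | h
    · exact h
    · exact absurd (by rw [hGof, ← h, ENNReal.ofReal_zero]) hG0
  have hp0 : 0 < 1/p := by positivity
  have hp1 : 0 ≤ 1 - 1/p := by
    have : 1/p < 1 := by rw [div_lt_one (by linarith)]; linarith
    linarith
  refine h1.trans ?_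
  rw [hFof, hGof, ENNReal.toReal_ofReal hf0, ENNReal.toReal_ofReal hg0]
  have hminof : min (ENNReal.ofReal f) (ENNReal.ofReal g) = ENNReal.ofReal (min f g) := by
    rcases le_total f g with h | h
    · rw [min_eq_left h, min_eq_left (ENNReal.ofReal_le_ofReal h)]
    · rw [min_eq_right h, min_eq_right (ENNReal.ofReal_le_ofReal h)]
  have hlognn : 0 ≤ Real.log (2 + f/g) :=
    Real.log_nonneg (by have := div_nonneg hf0 hg0; linarith)
  rw [hminof, ENNReal.ofReal_rpow_of_pos hf, ENNReal.ofReal_rpow_of_pos hg,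
    ← ENNReal.ofReal_mul (by positivity), ← ENNReal.ofReal_mul (by positivity),
    ← ENNReal.ofReal_mul (by positivity)]
  refine ENNReal.ofReal_le_ofReal ?_
  rcases le_total g f with hgf | hfg
  · -- g ≤ f : min = g, use aux_lp with r = f/g ≥ 1
    have hr1 : 1 ≤ f / g := (one_le_div hg).mpr hgf
    have haux := aux_lp p (f/g) hp hr1
    have hkey : (f/g)^(1/p) * g = f^(1/p) * g^(1-1/p) := by
      rw [Real.div_rpow hf.le hg.le, Real.rpow_sub hg, Real.rpow_one]
      field_simp
    rw [min_eq_right hgf]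
    calc C' * Real.log (2 + f/g) * g ≤ C' * ((p+3) * (f/g)^(1/p)) * g :=
          mul_le_mul_of_nonneg_right (mul_le_mul_of_nonneg_left haux hC'.le) hg0
      _ = C' * (p+3) * ((f/g)^(1/p) * g) := by ring
      _ = C' * (p+3) * (f^(1/p) * g^(1-1/p)) := by rw [hkey]
      _ = C' * (p+3) * f^(1/p) * g^(1-1/p) := by ring
  · -- f ≤ g : min = f
    have hr1 : f / g ≤ 1 := (div_le_one hg).mpr hfg
    have hlog : Real.log (2 + f/g) ≤ 2 := by
      have h3 : Real.log (2 + f/g) ≤ Real.log 3 :=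
        Real.log_le_log (by positivity) (by linarith)
      have := Real.log_le_sub_one_of_pos (x := 3) (by norm_num)
      linarith
    have hfle : f ≤ f^(1/p) * g^(1-1/p) := by
      have h2 : f = f^(1/p) * f^(1-1/p) := by
        rw [← Real.rpow_add hf]
        norm_num
      have h3 : f^(1-1/p) ≤ g^(1-1/p) := Real.rpow_le_rpow hf.le hfg hp1
      calc f = f^(1/p) * f^(1-1/p) := h2
        _ ≤ f^(1/p) * g^(1-1/p) :=
            mul_le_mul_of_nonneg_left h3 (by positivity)
    rw [min_eq_left hfg]
    have hrpos : (0:ℝ) ≤ f^(1/p) * g^(1-1/p) := by positivity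
    calc C' * Real.log (2 + f/g) * f ≤ C' * 2 * f :=
          mul_le_mul_of_nonneg_right (mul_le_mul_of_nonneg_left hlog hC'.le) hf0
      _ ≤ C' * 2 * (f^(1/p) * g^(1-1/p)) := mul_le_mul_of_nonneg_left hfle (by positivity)
      _ ≤ C' * (p+3) * (f^(1/p) * g^(1-1/p)) :=
          mul_le_mul_of_nonneg_right (mul_le_mul_of_nonneg_left (by linarith) hC'.le) hrpos
      _ = C' * (p+3) * f^(1/p) * g^(1-1/p) := by ring
end
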